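/- Let K be a field of characteristic not 2, V a K-vector space of dimension 3, and Q a quadratic form on V. Then for every element x of the Clifford algebra of Q, the product x * reverse x * involute (x * reverse x) is a scalar, i.e. it lies in the range of algebraMap K (CliffordAlgebra Q). (This is the paper's second three-dimensional determinant formula Det(A) = A⟦A⟧₂₃⟦A⟦A⟧₂₃⟧₁₄, written in reverse–inversion form as Det(A) = A · rev(A) · inv(A · rev(A)).) -/

import Mathlib

open CliffordAlgebra

section Aux

variable {K V : Type*} [Field K] [AddCommGroup V] [Module K V]

/-- Spanning lemma: with an orthogonal basis of a 3-dimensional space, the Clifford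
algebra is spanned by the 8 standard monomials. -/
theorem clifford_span_aux (Q : QuadraticForm K V)
    (b : Module.Basis (Fin 3) K V) (hb : ∀ i j : Fin 3, i ≠ j → Q.IsOrtho (b i) (b j))
    (x : CliffordAlgebra Q) :
    x ∈ Submodule.span K ({1, ι Q (b 0), ι Q (b 1), ι Q (b 2),
      ι Q (b 0) * ι Q (b 1), ι Q (b 0) * ι Q (b 2), ι Q (b 1) * ι Q (b 2),
      ι Q (b 0) * (ι Q (b 1) * ι Q (b 2))} : Set (CliffordAlgebra Q)) := by
  set e : Fin 3 → CliffordAlgebra Q := fun i => ι Q (b i) with he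
  set S : Submodule K (CliffordAlgebra Q) :=
    Submodule.span K ({1, e 0, e 1, e 2, e 0 * e 1, e 0 * e 2, e 1 * e 2,
      e 0 * (e 1 * e 2)} : Set (CliffordAlgebra Q)) with hS
  show x ∈ S
  have m1 : (1 : CliffordAlgebra Q) ∈ S :=
    Submodule.subset_span (Set.mem_insert _ _)
  have m2 : e 0 ∈ S :=
    Submodule.subset_span (Set.mem_insert_of_mem _ (Set.mem_insert _ _))
  have m3 : e 1 ∈ S :=
    Submodule.subset_span (Set.mem_insert_of_mem _ (Set.mem_insert_of_mem _
      (Set.mem_insert _ _)))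
  have m4 : e 2 ∈ S :=
    Submodule.subset_span (Set.mem_insert_of_mem _ (Set.mem_insert_of_mem _
      (Set.mem_insert_of_mem _ (Set.mem_insert _ _))))
  have m5 : e 0 * e 1 ∈ S :=
    Submodule.subset_span (Set.mem_insert_of_mem _ (Set.mem_insert_of_mem _
      (Set.mem_insert_of_mem _ (Set.mem_insert_of_mem _ (Set.mem_insert _ _)))))
  have m6 : e 0 * e 2 ∈ S :=
    Submodule.subset_span (Set.mem_insert_of_mem _ (Set.mem_insert_of_mem _
      (Set.mem_insert_of_mem _ (Set.mem_insert_of_mem _ (Set.mem_insert_of_mem _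
        (Set.mem_insert _ _))))))
  have m7 : e 1 * e 2 ∈ S :=
    Submodule.subset_span (Set.mem_insert_of_mem _ (Set.mem_insert_of_mem _
      (Set.mem_insert_of_mem _ (Set.mem_insert_of_mem _ (Set.mem_insert_of_mem _
        (Set.mem_insert_of_mem _ (Set.mem_insert _ _)))))))
  have m8 : e 0 * (e 1 * e 2) ∈ S :=
    Submodule.subset_span (Set.mem_insert_of_mem _ (Set.mem_insert_of_mem _
      (Set.mem_insert_of_mem _ (Set.mem_insert_of_mem _ (Set.mem_insert_of_mem _
        (Set.mem_insert_of_mem _ (Set.mem_insert_of_mem _ rfl)))))))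
  have malg : ∀ r : K, algebraMap K (CliffordAlgebra Q) r ∈ S := fun r => by
    rw [Algebra.algebraMap_eq_smul_one]; exact S.smul_mem r m1
  have msmul : ∀ (r : K) {z : CliffordAlgebra Q}, z ∈ S →
      algebraMap K (CliffordAlgebra Q) r * z ∈ S :=
    fun r z hz => by rw [← Algebra.smul_def]; exact S.smul_mem r hz
  have hsq : ∀ i, e i * e i = algebraMap K (CliffordAlgebra Q) (Q (b i)) :=
    fun i => ι_sq_scalar Q (b i)
  have hcomm : ∀ i j, i ≠ j → e i * e j = -(e j * e i) :=
    fun i j hij => ι_mul_ι_comm_of_isOrtho (hb _ _ hij)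
  have hA : ∀ (i j) (z : CliffordAlgebra Q), i ≠ j →
      e i * (e j * z) = -(e j * (e i * z)) :=
    fun i j z hij => ι_mul_ι_mul_of_isOrtho z (hb _ _ hij)
  have hB : ∀ (i) (z : CliffordAlgebra Q), e i * (e i * z) = Q (b i) • z :=
    fun i z => by rw [← mul_assoc, hsq, ← Algebra.smul_def]
  -- closure of S under left multiplication by each generator e i
  have key : ∀ i, ∀ z ∈ S, e i * z ∈ S := by
    intro i z hz
    induction hz using Submodule.span_induction with
    | zero => rw [mul_zero]; exact S.zero_mem
    | add u v _ _ hu hv => rw [mul_add]; exact S.add_mem hu hv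
    | smul r u _ hu => rw [mul_smul_comm]; exact S.smul_mem r hu
    | mem z hz =>
      fin_cases i <;>
        simp only [Fin.zero_eta, Fin.mk_one, Fin.reduceFinMk] <;>
        simp only [Set.mem_insert_iff, Set.mem_singleton_iff] at hz <;>
        rcases hz with rfl | rfl | rfl | rfl | rfl | rfl | rfl | rfl
      -- e 0 * _
      · rw [mul_one]; exact m2
      · rw [hsq]; exact malg _
      · exact m5
      · exact m6
      · rw [hB]; exact S.smul_mem _ m3
      · rw [hB]; exact S.smul_mem _ m4
      · exact m8
      · rw [hB]; exact S.smul_mem _ m7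
      -- e 1 * _
      · rw [mul_one]; exact m3
      · rw [hcomm 1 0 (by decide)]; exact S.neg_mem m5
      · rw [hsq]; exact malg _
      · exact m7
      · rw [hA 1 0 _ (by decide), hsq, ← Algebra.commutes, ← Algebra.smul_def]
        exact S.neg_mem (S.smul_mem _ m2)
      · rw [hA 1 0 _ (by decide)]; exact S.neg_mem m8
      · rw [hB]; exact S.smul_mem _ m4
      · rw [hA 1 0 _ (by decide), hB, mul_smul_comm]
        exact S.neg_mem (S.smul_mem _ m6)
      -- e 2 * _
      · rw [mul_one]; exact m4
      · rw [hcomm 2 0 (by decide)]; exact S.neg_mem m6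
      · rw [hcomm 2 1 (by decide)]; exact S.neg_mem m7
      · rw [hsq]; exact malg _
      · rw [hA 2 0 _ (by decide), hcomm 2 1 (by decide), mul_neg, neg_neg]
        exact m8
      · rw [hA 2 0 _ (by decide), hsq, ← Algebra.commutes, ← Algebra.smul_def]
        exact S.neg_mem (S.smul_mem _ m2)
      · rw [hA 2 1 _ (by decide), hsq, ← Algebra.commutes, ← Algebra.smul_def]
        exact S.neg_mem (S.smul_mem _ m3)
      · rw [hA 2 0 _ (by decide), hA 2 1 _ (by decide), hsq, mul_neg, neg_neg,
          ← Algebra.commutes, ← Algebra.smul_def, mul_smul_comm]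
        exact S.smul_mem _ m5
  have main : ∀ z : CliffordAlgebra Q, z ∈ S ∧ ∀ w ∈ S, z * w ∈ S := by
    intro z
    induction z using CliffordAlgebra.induction with
    | algebraMap r => exact ⟨malg r, fun w hw => msmul r hw⟩
    | ι v =>
      have hv : ι Q v = ∑ i : Fin 3, b.repr v i • e i := by
        conv_lhs => rw [← b.sum_repr v]
        rw [map_sum]
        simp [he, map_smul]
      constructor
      · rw [hv]
        refine S.sum_mem fun i _ => S.smul_mem _ ?_
        fin_cases i
        · exact m2
        · exact m3
        · exact m4
      · intro w hw
        rw [hv, Finset.sum_mul]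
        refine S.sum_mem fun i _ => ?_
        rw [smul_mul_assoc]
        exact S.smul_mem _ (key i w hw)
    | add u v hu hv =>
      exact ⟨S.add_mem hu.1 hv.1, fun w hw => by
        rw [add_mul]; exact S.add_mem (hu.2 w hw) (hv.2 w hw)⟩
    | mul u v hu hv =>
      exact ⟨hu.2 _ hv.1, fun w hw => by
        rw [mul_assoc]; exact hu.2 _ (hv.2 w hw)⟩
  exact (main x).1

/-- If `reverse y = y` (dimension 3, orthogonal basis), then `y * involute y`
is a scalar. -/
theorem clifford_key_aux (h2 : (2 : K) ≠ 0) (Q : QuadraticForm K V)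
    (b : Module.Basis (Fin 3) K V) (hb : ∀ i j : Fin 3, i ≠ j → Q.IsOrtho (b i) (b j))
    (y : CliffordAlgebra Q) (hy : reverse y = y) :
    y * involute y ∈ Set.range (algebraMap K (CliffordAlgebra Q)) := by
  set P : Submodule K (CliffordAlgebra Q) :=
    Submodule.span K {(1 : CliffordAlgebra Q)} ⊔ LinearMap.range (ι Q) with hP
  set N : Submodule K (CliffordAlgebra Q) :=
    Submodule.span K ({ι Q (b 0) * ι Q (b 1), ι Q (b 0) * ι Q (b 2),
      ι Q (b 1) * ι Q (b 2),
      ι Q (b 0) * (ι Q (b 1) * ι Q (b 2))} : Set (CliffordAlgebra Q)) with hN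
  -- reverse negates everything in N
  have hrevN : ∀ z ∈ N, reverse z = -z := by
    intro z hz
    induction hz using Submodule.span_induction with
    | zero => simp
    | add u v _ _ hu hv => rw [map_add, hu, hv, neg_add]
    | smul r u _ hu => rw [map_smul, hu, smul_neg]
    | mem z hz =>
      simp only [Set.mem_insert_iff, Set.mem_singleton_iff] at hz
      rcases hz with rfl | rfl | rfl | rfl
      · rw [reverse.map_mul, reverse_ι, reverse_ι,
          ι_mul_ι_comm_of_isOrtho (hb 1 0 (by decide))]
      · rw [reverse.map_mul, reverse_ι, reverse_ι,
          ι_mul_ι_comm_of_isOrtho (hb 2 0 (by decide))]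
      · rw [reverse.map_mul, reverse_ι, reverse_ι,
          ι_mul_ι_comm_of_isOrtho (hb 2 1 (by decide))]
      · rw [reverse.map_mul, reverse.map_mul, reverse_ι, reverse_ι, reverse_ι,
          mul_assoc, ι_mul_ι_mul_of_isOrtho _ (hb 2 1 (by decide)),
          ι_mul_ι_comm_of_isOrtho (hb 2 0 (by decide)), mul_neg, neg_neg,
          ι_mul_ι_mul_of_isOrtho _ (hb 1 0 (by decide))]
  -- y decomposes along P and N
  have hyPN : y ∈ P ⊔ N := by
    have hsp := clifford_span_aux Q b hb y
    refine Submodule.span_le.mpr ?_ hsp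
    intro z hz
    simp only [Set.mem_insert_iff, Set.mem_singleton_iff] at hz
    rcases hz with rfl | rfl | rfl | rfl | rfl | rfl | rfl | rfl
    · exact Submodule.mem_sup_left (Submodule.mem_sup_left
        (Submodule.mem_span_singleton_self _))
    · exact Submodule.mem_sup_left (Submodule.mem_sup_right ⟨b 0, rfl⟩)
    · exact Submodule.mem_sup_left (Submodule.mem_sup_right ⟨b 1, rfl⟩)
    · exact Submodule.mem_sup_left (Submodule.mem_sup_right ⟨b 2, rfl⟩)
    · exact Submodule.mem_sup_right (Submodule.subset_span (Set.mem_insert _ _))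
    · exact Submodule.mem_sup_right (Submodule.subset_span
        (Set.mem_insert_of_mem _ (Set.mem_insert _ _)))
    · exact Submodule.mem_sup_right (Submodule.subset_span
        (Set.mem_insert_of_mem _ (Set.mem_insert_of_mem _ (Set.mem_insert _ _))))
    · exact Submodule.mem_sup_right (Submodule.subset_span
        (Set.mem_insert_of_mem _ (Set.mem_insert_of_mem _
          (Set.mem_insert_of_mem _ rfl))))
  obtain ⟨p, hp, m, hm, rfl⟩ := Submodule.mem_sup.mp hyPN
  obtain ⟨s, hs, w, hw, rfl⟩ := Submodule.mem_sup.mp hp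
  obtain ⟨c, rfl⟩ := Submodule.mem_span_singleton.mp hs
  obtain ⟨u, rfl⟩ := hw
  have hrevm := hrevN m hm
  -- deduce m = 0
  have hm0 : m = 0 := by
    rw [map_add, map_add, map_smul, reverse.map_one, reverse_ι, hrevm] at hy
    have hmm : -m = m := add_left_cancel hy
    have h2m : (2 : K) • m = 0 := by
      rw [two_smul]
      nth_rewrite 1 [← hmm]
      exact neg_add_cancel m
    rcases smul_eq_zero.mp h2m with h | h
    · exact absurd h h2
    · exact h
  subst hm0
  rw [add_zero]
  -- now y = c • 1 + ι Q u
  have hinv : involute (c • (1 : CliffordAlgebra Q) + ι Q u) =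
      c • 1 - ι Q u := by
    rw [map_add, map_smul, map_one, involute_ι, ← sub_eq_add_neg]
  have hfin : (c • (1 : CliffordAlgebra Q) + ι Q u) *
      involute (c • (1 : CliffordAlgebra Q) + ι Q u)
      = algebraMap K (CliffordAlgebra Q) (c * c - Q u) := by
    rw [hinv, map_sub, add_mul, mul_sub, mul_sub]
    simp only [smul_mul_assoc, mul_smul_comm, one_mul, mul_one, smul_smul,
      ι_sq_scalar, Algebra.algebraMap_eq_smul_one (R := K) (c * c)]
    abel
  exact ⟨_, hfin.symm⟩

end Aux

/-- In dimension 3 (char K ≠ 2), `x * reverse x * involute (x * reverse x)`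
is a scalar: the paper's second three-dimensional determinant formula
`Det(A) = A ⟦A⟧₂₃ ⟦A ⟦A⟧₂₃⟧₁₄`. -/
theorem det_dim_three_second (K V : Type*) [Field K] [AddCommGroup V] [Module K V]
    [FiniteDimensional K V] (h2 : (2 : K) ≠ 0)
    (hdim : Module.finrank K V = 3)
    (Q : QuadraticForm K V) (x : CliffordAlgebra Q) :
    x * reverse x * involute (x * reverse x) ∈
      Set.range (algebraMap K (CliffordAlgebra Q)) := by
  haveI : Invertible (2 : K) := invertibleOfNonzero h2
  obtain ⟨v, hv⟩ := LinearMap.BilinForm.exists_orthogonal_basis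
    (QuadraticForm.associated_isSymm K Q)
  let b : Module.Basis (Fin 3) K V := v.reindex (finCongr hdim)
  have hb : ∀ i j : Fin 3, i ≠ j → Q.IsOrtho (b i) (b j) := by
    intro i j hij
    rw [← QuadraticMap.associated_isOrtho]
    simp only [b, Module.Basis.reindex_apply]
    exact hv (fun h => hij (by simpa using congrArg (finCongr hdim) h))
  have hy : reverse (x * reverse x) = x * reverse x := by
    rw [reverse.map_mul, reverse_reverse]
  exact clifford_key_aux h2 Q b hb _ hy
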